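/- Walk singlet forces zero eigenvector components (special case): let H be a real symmetric matrix with cospectral vertices u, v, eigenvector basis chosen with definite parity, and let c be a walk singlet of parity −p relative to (u,v), i.e., (H^k)_{uc} = −p·(H^k)_{vc} for all k. If the eigenvalues of eigenvectors with parity p and nonzero components on u,v are pairwise distinct, then every such eigenvector φ (with φ_u = p·φ_v ≠ 0) satisfies φ_c = 0. -/

import Mathlib

open Matrix Polynomial Finset

/-- Walk singlet forces zero eigenvector components: if `c` is a walk singlet of
parity `−p` relative to the cospectral pair `(u,v)` and the eigenvalues of the
parity-`p` eigenvectors with nonzero components on `u,v` are pairwise distinct,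
then every such eigenvector vanishes on `c`. -/
theorem stmt17 {N : ℕ} (H : Matrix (Fin N) (Fin N) ℝ) (hsymm : H.IsSymm)
    (u v c : Fin N) (p : ℝ) (hp : p = 1 ∨ p = -1)
    (φ : Fin N → (Fin N → ℝ)) (lam : Fin N → ℝ)
    (hortho : ∀ ν μ : Fin N, dotProduct (φ ν) (φ μ) = if ν = μ then 1 else 0)
    (heig : ∀ ν : Fin N, H.mulVec (φ ν) = lam ν • φ ν)
    (hparity : ∀ ν : Fin N, φ ν u = φ ν v ∨ φ ν u = -(φ ν v))
    (hsinglet : ∀ k : ℕ, (H ^ k) u c = -p * (H ^ k) v c)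
    (hdistinct : ∀ ν μ : Fin N, ν ≠ μ →
      (φ ν u = p * φ ν v ∧ φ ν u ≠ 0) →
      (φ μ u = p * φ μ v ∧ φ μ u ≠ 0) → lam ν ≠ lam μ) :
    ∀ ν : Fin N, φ ν u = p * φ ν v → φ ν u ≠ 0 → φ ν c = 0 := by
  classical
  intro ν0 hpar0 hne0
  set P : Matrix (Fin N) (Fin N) ℝ := Matrix.of (fun i ν => φ ν i) with hPdef
  have hPtP : Pᵀ * P = 1 := by
    ext ν μ
    have := hortho ν μ
    simpa [Matrix.mul_apply, Matrix.transpose_apply, dotProduct,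
      Matrix.one_apply, hPdef] using this
  have hPPt : P * Pᵀ = 1 := mul_eq_one_comm.mp hPtP
  have hHP : H * P = P * Matrix.diagonal lam := by
    ext i ν
    have h1 : (H.mulVec (φ ν)) i = lam ν * φ ν i := by
      rw [heig ν]; simp
    have h2 : (H * P) i ν = (H.mulVec (φ ν)) i := by
      simp [Matrix.mul_apply, Matrix.mulVec, dotProduct, hPdef]
    rw [h2, h1, Matrix.mul_diagonal]
    simp [hPdef, mul_comm]
  have hPk : ∀ k : ℕ, H ^ k * P = P * (Matrix.diagonal lam) ^ k := by
    intro k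
    induction k with
    | zero => simp
    | succ k ih =>
      rw [pow_succ, pow_succ, Matrix.mul_assoc, hHP, ← Matrix.mul_assoc, ih,
        Matrix.mul_assoc]
  have hent : ∀ (k : ℕ) (i : Fin N),
      (H ^ k) i c = ∑ ν, φ ν i * (lam ν ^ k * φ ν c) := by
    intro k i
    have : (H ^ k) = P * (Matrix.diagonal lam) ^ k * Pᵀ := by
      calc H ^ k = H ^ k * (P * Pᵀ) := by rw [hPPt, Matrix.mul_one]
      _ = (H ^ k * P) * Pᵀ := by rw [Matrix.mul_assoc]
      _ = P * (Matrix.diagonal lam) ^ k * Pᵀ := by rw [hPk]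
    rw [this]
    rw [Matrix.diagonal_pow, Matrix.mul_apply]
    apply Finset.sum_congr rfl
    intro ν _
    rw [Matrix.mul_diagonal]
    simp only [hPdef, Matrix.of_apply, Matrix.transpose_apply, Pi.pow_apply]
    ring
  -- the coefficients
  set a : Fin N → ℝ := fun ν => (φ ν u + p * φ ν v) * φ ν c with hadef
  have moment : ∀ k : ℕ, ∑ ν, lam ν ^ k * a ν = 0 := by
    intro k
    have h1 : ∑ ν, lam ν ^ k * a ν
        = (∑ ν, φ ν u * (lam ν ^ k * φ ν c)) + p * ∑ ν, φ ν v * (lam ν ^ k * φ ν c) := by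
      rw [Finset.mul_sum, ← Finset.sum_add_distrib]
      apply Finset.sum_congr rfl
      intro ν _
      simp only [hadef]
      ring
    rw [h1, ← hent k u, ← hent k v, hsinglet k]
    ring
  have heval : ∀ q : Polynomial ℝ, ∑ ν, Polynomial.eval (lam ν) q * a ν = 0 := by
    intro q
    induction q using Polynomial.induction_on with
    | C r =>
      have := moment 0
      simp only [pow_zero, one_mul] at this
      simp only [Polynomial.eval_C]
      rw [← Finset.mul_sum, this, mul_zero]
    | add f g hf hg =>
      simp only [Polynomial.eval_add, add_mul, Finset.sum_add_distrib, hf, hg, add_zero]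
    | monomial n r _ =>
      have := moment (n + 1)
      simp only [Polynomial.eval_mul, Polynomial.eval_C, Polynomial.eval_pow,
        Polynomial.eval_X]
      calc ∑ ν, r * lam ν ^ (n + 1) * a ν = r * ∑ ν, lam ν ^ (n + 1) * a ν := by
            rw [Finset.mul_sum]; apply Finset.sum_congr rfl; intro ν _; ring
        _ = 0 := by rw [this, mul_zero]
  have hp0 : p ≠ 0 := by rcases hp with rfl | rfl <;> norm_num
  have ha0 : ∀ ν, ¬(φ ν u = p * φ ν v ∧ φ ν u ≠ 0) → a ν = 0 := by
    intro ν hν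
    push_neg at hν
    simp only [hadef]
    rcases hp with rfl | rfl <;> rcases hparity ν with h | h
    · have h0 := hν (by rw [h]; ring)
      rw [h0] at h
      rw [h0, ← h]; ring
    · rw [h]; ring
    · rw [h]; ring
    · have h0 := hν (by rw [h]; ring)
      rw [h0] at h
      have hv : φ ν v = 0 := by linarith
      rw [h0, hv]; ring
  set S : Finset (Fin N) := Finset.univ.filter (fun ν => φ ν u = p * φ ν v ∧ φ ν u ≠ 0)
    with hSdef
  have hν0S : ν0 ∈ S := Finset.mem_filter.mpr ⟨Finset.mem_univ _, hpar0, hne0⟩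
  set q : Polynomial ℝ := ∏ μ ∈ S.erase ν0, (Polynomial.X - Polynomial.C (lam μ))
    with hqdef
  have hq := heval q
  have hsingle : ∑ ν, Polynomial.eval (lam ν) q * a ν
      = Polynomial.eval (lam ν0) q * a ν0 := by
    apply Finset.sum_eq_single_of_mem ν0 (Finset.mem_univ ν0)
    intro ν _ hνν0
    by_cases hνS : ν ∈ S
    · have hmem : ν ∈ S.erase ν0 := Finset.mem_erase.mpr ⟨hνν0, hνS⟩
      have : Polynomial.eval (lam ν) q = 0 := by
        rw [hqdef, Polynomial.eval_prod]
        apply Finset.prod_eq_zero hmem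
        simp
      rw [this, zero_mul]
    · have : a ν = 0 := by
        apply ha0
        intro hcond
        exact hνS (Finset.mem_filter.mpr ⟨Finset.mem_univ _, hcond⟩)
      rw [this, mul_zero]
  rw [hsingle] at hq
  have hqne : Polynomial.eval (lam ν0) q ≠ 0 := by
    rw [hqdef, Polynomial.eval_prod]
    apply Finset.prod_ne_zero_iff.mpr
    intro μ hμ
    rw [Finset.mem_erase] at hμ
    have hμS := hμ.2
    rw [hSdef, Finset.mem_filter] at hμS
    have hne : ν0 ≠ μ := fun h => hμ.1 h.symm
    have := hdistinct ν0 μ hne ⟨hpar0, hne0⟩ hμS.2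
    simp [sub_eq_zero, this]
  have haν0 : a ν0 = 0 := by
    rcases mul_eq_zero.mp hq with h | h
    · exact absurd h hqne
    · exact h
  have : (φ ν0 u + φ ν0 u) * φ ν0 c = 0 := by
    have hpv : p * φ ν0 v = φ ν0 u := hpar0.symm
    simpa [hadef, hpv] using haν0
  have h2 : φ ν0 u + φ ν0 u ≠ 0 := by
    intro h; apply hne0; linarith
  exact (mul_eq_zero.mp this).resolve_left h2
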